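/- If α = 1/2, then the even-case para-Racah recurrence coefficients are mirror-symmetric: b_n = b_{N-n} for all n = 0, 1, …, N, and u_n = u_{N-n+1} for all n = 1, 2, …, N. -/

import Mathlib

open Filter Topology Polynomial

noncomputable section

/-- The recurrence coefficient `bₙ` of the para-Racah polynomials, even case `N = 2j`. -/
def bEven (j : ℕ) (a c : ℝ) (n : ℕ) : ℝ :=
  ((n : ℝ) - 2 * j) * ((n : ℝ) + a + c) * ((n : ℝ) + a - c - j + 1) /
      (2 * (2 * (n : ℝ) + 1 - 2 * j)) +
    (n : ℝ) * ((n : ℝ) - 2 * j - a - c) * ((n : ℝ) - j - 1 + c - a) /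
      (2 * (2 * (n : ℝ) - 1 - 2 * j)) - a ^ 2

/-- The recurrence coefficient `uₙ` of the para-Racah polynomials, even case `N = 2j`. -/
def uEven (j : ℕ) (a c α : ℝ) (n : ℕ) : ℝ :=
  if n = j then
    -(1 - α) * (j : ℝ) * ((j : ℝ) + 1) * (a - c) * (a - c + 1) * (a + c + j - 1) * (a + c + j) / 2
  else if n = j + 1 then
    -α * (j : ℝ) * ((j : ℝ) + 1) * (a - c) * (a - c + 1) * (a + c + j - 1) * (a + c + j) / 2
  else
    (n : ℝ) * (2 * (j : ℝ) - n + 1) * (a + c + n - 1) * (a - c + j - n + 1)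
        * (-a + c + j - n) * (a + c + 2 * j - n) /
      (4 * (2 * (j : ℝ) - 2 * n + 1) ^ 2)

theorem paraRacahEven_mirror_symmetry (j : ℕ) (hj : 1 ≤ j) (a c α : ℝ) (hα : α = 1 / 2) :
    (∀ n : ℕ, n ≤ 2 * j → bEven j a c n = bEven j a c (2 * j - n)) ∧
    (∀ n : ℕ, 1 ≤ n → n ≤ 2 * j → uEven j a c α n = uEven j a c α (2 * j - n + 1)) := by
  subst hα
  have key : ∀ p q : ℕ, (2 * (p:ℝ) + 1 - 2 * q) ≠ 0 := by
    intro p q h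
    have h' : (2 * p + 1 : ℝ) = ((2 * q : ℕ) : ℝ) := by push_cast; linarith
    have : 2 * p + 1 = 2 * q := by exact_mod_cast h'
    omega
  constructor
  · intro n hn
    have hc : ((2 * j - n : ℕ) : ℝ) = 2 * (j:ℝ) - n := by
      have h' : 2 * j - n + n = 2 * j := by omega
      have := congrArg (Nat.cast (R := ℝ)) h'
      push_cast at this
      linarith
    unfold bEven
    rw [hc]
    have h1 : (2 * (n:ℝ) + 1 - 2 * j) ≠ 0 := key n j
    have h2 : (2 * (n:ℝ) - 1 - 2 * j) ≠ 0 := by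
      intro h; apply key j n; linarith
    have h3 : (2 * (2 * (j:ℝ) - n) + 1 - 2 * j) ≠ 0 := by
      intro h; apply key j n; linarith
    have h4 : (2 * (2 * (j:ℝ) - n) - 1 - 2 * j) ≠ 0 := by
      intro h; apply key n j; linarith
    rw [sub_left_inj, div_add_div _ _ (mul_ne_zero two_ne_zero h1) (mul_ne_zero two_ne_zero h2),
      div_add_div _ _ (mul_ne_zero two_ne_zero h3) (mul_ne_zero two_ne_zero h4),
      div_eq_div_iff (mul_ne_zero (mul_ne_zero two_ne_zero h1) (mul_ne_zero two_ne_zero h2))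
        (mul_ne_zero (mul_ne_zero two_ne_zero h3) (mul_ne_zero two_ne_zero h4))]
    ring
  · intro n h1 h2
    have hjne : j + 1 ≠ j := by omega
    rcases eq_or_ne n j with he | hnj
    · have h3 : 2 * j - n + 1 = j + 1 := by omega
      rw [h3, he]
      simp [uEven, hjne]
      ring
    · rcases eq_or_ne n (j + 1) with he | hnj1
      · have h3 : 2 * j - n + 1 = j := by omega
        rw [h3, he]
        simp [uEven, hjne]
        ring
      · have hm1 : 2 * j - n + 1 ≠ j := by omega
        have hm2 : 2 * j - n + 1 ≠ j + 1 := by omega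
        have hc : ((2 * j - n + 1 : ℕ) : ℝ) = 2 * (j:ℝ) - n + 1 := by
          have h' : 2 * j - n + n = 2 * j := by omega
          have := congrArg (Nat.cast (R := ℝ)) h'
          push_cast at this
          push_cast
          linarith
        unfold uEven
        rw [if_neg hnj, if_neg hnj1, if_neg hm1, if_neg hm2, hc]
        have hd1 : (2 * (j:ℝ) - 2 * n + 1) ≠ 0 := by
          intro h; apply key j n; linarith
        have hd2 : (2 * (j:ℝ) - 2 * (2 * (j:ℝ) - n + 1) + 1) ≠ 0 := by
          intro h; apply key j n; linarith
        field_simp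
        ring
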